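/- Let λ ∈ (0,Λ] be a measurable speed function bounded by Λ, f : ℝ → ℝ be 1-Lipschitz nondecreasing, and define the Hopf–Lax function h(t,ξ) := inf over piecewise C¹ paths w : [0,t] → ℝ with w(t) = ξ of ∫₀ᵗ λ(s,w(s))·φ(w'(s)/λ(s,w(s))) ds + f(w(0)). Then for all t ∈ [0,T] and ξ ≤ ξ' ∈ ℝ: 0 ≤ h(t,ξ') − h(t,ξ) ≤ ξ' − ξ. -/

import Mathlib

/-- The Hopf–Lax kernel `φ`. -/
noncomputable def hlKernel (ξ : ℝ) : ℝ :=
  if ξ ≤ -1 then 0 else if ξ < 1 then (ξ + 1) ^ 2 / 4 else ξ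

/-- A path is piecewise `C¹` on `[a,b]`: it is continuous, and `C¹` on each piece of
some finite partition of `[a,b]`. -/
def PiecewiseC1On (w : ℝ → ℝ) (a b : ℝ) : Prop :=
  ContinuousOn w (Set.Icc a b) ∧
  ∃ (k : ℕ) (s : Fin (k + 1) → ℝ), StrictMono s ∧ s 0 = a ∧ s (Fin.last k) = b ∧
    ∀ i : Fin k, ContDiffOn ℝ 1 w (Set.Icc (s i.castSucc) (s i.succ))

/-- The Hopf–Lax function for a space-time dependent speed `λ` and initial data `f`. -/
noncomputable def hopfLax (lam : ℝ → ℝ → ℝ) (f : ℝ → ℝ) (t ξ : ℝ) : ℝ :=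
  sInf {y : ℝ | ∃ w : ℝ → ℝ, PiecewiseC1On w 0 t ∧ w t = ξ ∧
    y = (∫ s in (0:ℝ)..t, lam s (w s) * hlKernel (deriv w s / lam s (w s))) + f (w 0)}

open Set MeasureTheory intervalIntegral Filter

lemma hlKernel_nonneg (x : ℝ) : 0 ≤ hlKernel x := by
  unfold hlKernel; split_ifs with h1 h2
  · exact le_rfl
  · positivity
  · linarith

lemma le_hlKernel (x : ℝ) : x ≤ hlKernel x := by
  unfold hlKernel; split_ifs with h1 h2
  · linarith
  · nlinarith [sq_nonneg (x - 1)]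
  · exact le_rfl

lemma hlKernel_le (x : ℝ) : hlKernel x ≤ |x| + 1 := by
  unfold hlKernel; split_ifs with h1 h2
  · positivity
  · rcases abs_cases x with ⟨h,_⟩|⟨h,_⟩ <;> nlinarith
  · rcases abs_cases x with ⟨h,_⟩|⟨h,_⟩ <;> nlinarith

lemma hlKernel_of_one_le {x : ℝ} (h : 1 ≤ x) : hlKernel x = x := by
  unfold hlKernel; rw [if_neg (by linarith), if_neg (by linarith)]

lemma hlKernel_of_le_neg_one {x : ℝ} (h : x ≤ -1) : hlKernel x = 0 := by
  unfold hlKernel; rw [if_pos h]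

lemma measurable_hlKernel : Measurable hlKernel := by
  unfold hlKernel
  refine Measurable.ite (measurableSet_le measurable_id measurable_const) measurable_const ?_
  exact Measurable.ite (measurableSet_lt measurable_id measurable_const)
    (by fun_prop) measurable_id

variable {lam : ℝ → ℝ → ℝ} {Λ : ℝ}

/-- The cost integrand. -/
noncomputable def cst (lam : ℝ → ℝ → ℝ) (w : ℝ → ℝ) (s : ℝ) : ℝ :=
  lam s (w s) * hlKernel (deriv w s / lam s (w s))

lemma cst_nonneg (hpos : ∀ t ξ, 0 < lam t ξ) (w : ℝ → ℝ) (s : ℝ) : 0 ≤ cst lam w s :=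
  mul_nonneg (hpos s (w s)).le (hlKernel_nonneg _)

lemma deriv_le_cst (hpos : ∀ t ξ, 0 < lam t ξ) (w : ℝ → ℝ) (s : ℝ) :
    deriv w s ≤ cst lam w s := by
  have h := hpos s (w s)
  have := mul_le_mul_of_nonneg_left (le_hlKernel (deriv w s / lam s (w s))) h.le
  calc deriv w s = lam s (w s) * (deriv w s / lam s (w s)) := by field_simp
  _ ≤ cst lam w s := this

lemma piece_facts (hmeas : Measurable (Function.uncurry lam))
    (hpos : ∀ t ξ, 0 < lam t ξ) (hbd : ∀ t ξ, lam t ξ ≤ Λ)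
    {w : ℝ → ℝ} {a b : ℝ} (hab : a ≤ b) (hcd : ContDiffOn ℝ 1 w (Icc a b)) :
    IntervalIntegrable (fun s => deriv w s) volume a b ∧
    IntervalIntegrable (cst lam w) volume a b ∧
    (∫ s in a..b, deriv w s) = w b - w a := by
  rcases eq_or_lt_of_le hab with rfl | hab'
  · exact ⟨IntervalIntegrable.refl, IntervalIntegrable.refl, by simp⟩
  -- derivative facts
  have hmemIoo : ∀ x ∈ Ioo a b, Icc a b ∈ nhds x := fun x hx =>
    Icc_mem_nhds hx.1 hx.2
  have hderiv : ∀ x ∈ Ioo a b, HasDerivAt w (deriv w x) x := by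
    intro x hx
    have hd : DifferentiableAt ℝ w x :=
      ((hcd.differentiableOn one_ne_zero x (Ioo_subset_Icc_self hx)).differentiableAt
        (hmemIoo x hx))
    exact hd.hasDerivAt
  have hdW : ∀ x ∈ Ioo a b, derivWithin w (Icc a b) x = deriv w x := fun x hx =>
    derivWithin_of_mem_nhds (hmemIoo x hx)
  have hcont : ContinuousOn (derivWithin w (Icc a b)) (Icc a b) :=
    hcd.continuousOn_derivWithin (uniqueDiffOn_Icc hab') le_rfl
  obtain ⟨M, hM⟩ := (isCompact_Icc (a := a) (b := b)).exists_bound_of_continuousOn hcont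
  have hMnn : 0 ≤ M := le_trans (norm_nonneg _) (hM a (left_mem_Icc.2 hab))
  have hMd : ∀ x ∈ Ioo a b, |deriv w x| ≤ M := by
    intro x hx
    rw [← hdW x hx]
    exact hM x (Ioo_subset_Icc_self hx)
  have hrestrict : volume.restrict (Icc a b) = volume.restrict (Ioo a b) :=
    (Measure.restrict_congr_set Ioo_ae_eq_Icc).symm
  have haeIoo : ∀ {p : ℝ → Prop}, (∀ x ∈ Ioo a b, p x) →
      (∀ᵐ x ∂volume.restrict (Icc a b), p x) := by
    intro p hp
    rw [hrestrict]
    exact (ae_restrict_iff' measurableSet_Ioo).2 (Filter.Eventually.of_forall hp)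
  -- integrability of deriv w on Icc a b
  have haesm_d : AEStronglyMeasurable (fun s => deriv w s) (volume.restrict (Icc a b)) :=
    (measurable_deriv w).aestronglyMeasurable.restrict
  have hconst : IntegrableOn (fun _ : ℝ => M + Λ) (Icc a b) :=
    integrableOn_const measure_Icc_lt_top.ne
  have hint_d : IntegrableOn (fun s => deriv w s) (Icc a b) := by
    refine Integrable.mono' hconst haesm_d (haeIoo fun x hx => ?_)
    have := hMd x hx
    have hΛ0 : 0 ≤ Λ := le_trans (hpos 0 0).le (hbd 0 0)
    rw [Real.norm_eq_abs]
    linarith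
  -- integrability of cst on Icc a b
  have haem_w : AEMeasurable w (volume.restrict (Icc a b)) :=
    hcd.continuousOn.aemeasurable measurableSet_Icc
  have haem_l : AEMeasurable (fun s => lam s (w s)) (volume.restrict (Icc a b)) := by
    have : AEMeasurable (fun s => (s, w s)) (volume.restrict (Icc a b)) :=
      aemeasurable_id.prodMk haem_w
    exact hmeas.comp_aemeasurable this
  have haesm_c : AEStronglyMeasurable (cst lam w) (volume.restrict (Icc a b)) := by
    refine AEMeasurable.aestronglyMeasurable ?_
    exact haem_l.mul (measurable_hlKernel.comp_aemeasurable
      ((measurable_deriv w).aemeasurable.div haem_l))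
  have hint_c : IntegrableOn (cst lam w) (Icc a b) := by
    refine Integrable.mono' hconst haesm_c (haeIoo fun x hx => ?_)
    have hl := hpos x (w x)
    have hlΛ := hbd x (w x)
    have h1 : cst lam w x ≤ |deriv w x| + lam x (w x) := by
      have := mul_le_mul_of_nonneg_left (hlKernel_le (deriv w x / lam x (w x))) hl.le
      calc cst lam w x ≤ lam x (w x) * (|deriv w x / lam x (w x)| + 1) := this
      _ = |deriv w x| + lam x (w x) := by
          rw [abs_div, abs_of_pos hl]; field_simp
    have h2 : 0 ≤ cst lam w x := cst_nonneg hpos w x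
    rw [Real.norm_eq_abs, abs_of_nonneg h2]
    have := hMd x hx
    linarith
  have hii_d : IntervalIntegrable (fun s => deriv w s) volume a b := by
    rw [← uIcc_of_le hab] at hint_d; exact hint_d.intervalIntegrable
  have hii_c : IntervalIntegrable (cst lam w) volume a b := by
    rw [← uIcc_of_le hab] at hint_c; exact hint_c.intervalIntegrable
  exact ⟨hii_d, hii_c, integral_eq_sub_of_hasDerivAt_of_le hab hcd.continuousOn hderiv hii_d⟩

lemma path_facts (hmeas : Measurable (Function.uncurry lam))
    (hpos : ∀ t ξ, 0 < lam t ξ) (hbd : ∀ t ξ, lam t ξ ≤ Λ)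
    {w : ℝ → ℝ} {t : ℝ} (ht : 0 ≤ t) (hw : PiecewiseC1On w 0 t) :
    IntervalIntegrable (cst lam w) volume 0 t ∧
    w t - w 0 ≤ ∫ s in (0:ℝ)..t, cst lam w s := by
  obtain ⟨hc, k, s, hsm, hs0, hsl, hpieces⟩ := hw
  set a : ℕ → ℝ := fun n => s ⟨min n k, Nat.lt_succ_of_le (min_le_right _ _)⟩ with ha
  have ha0 : a 0 = 0 := by
    rw [ha]; simpa [Nat.min_eq_left (Nat.zero_le k)] using hs0
  have hak : a k = t := by
    rw [ha]; simpa [Fin.last] using hsl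
  have hpiece' : ∀ i, i < k → a i ≤ a (i + 1) ∧ ContDiffOn ℝ 1 w (Icc (a i) (a (i + 1))) := by
    intro i hik
    have h1 : a i = s (⟨i, by omega⟩ : Fin k).castSucc := by
      simp [ha, Fin.castSucc, Fin.castAdd, Fin.castLE, Nat.min_eq_left (by omega : i ≤ k)]
    have h2 : a (i + 1) = s (⟨i, by omega⟩ : Fin k).succ := by
      simp [ha, Fin.succ, Nat.min_eq_left (by omega : i + 1 ≤ k)]
    rw [h1, h2]
    exact ⟨(hsm.monotone (by simp [Fin.le_def])), hpieces _⟩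
  have hfacts : ∀ i, i < k → IntervalIntegrable (fun s => deriv w s) volume (a i) (a (i+1)) ∧
      IntervalIntegrable (cst lam w) volume (a i) (a (i+1)) ∧
      (∫ s in (a i)..(a (i+1)), deriv w s) = w (a (i+1)) - w (a i) := by
    intro i hik
    obtain ⟨h1, h2⟩ := hpiece' i hik
    exact piece_facts hmeas hpos hbd h1 h2
  have hii : IntervalIntegrable (cst lam w) volume 0 t := by
    rw [← ha0, ← hak]
    exact IntervalIntegrable.trans_iterate (fun i hik => (hfacts i hik).2.1)
  refine ⟨hii, ?_⟩
  have hsum : ∑ i ∈ Finset.range k, ∫ x in (a i)..(a (i+1)), cst lam w x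
      = ∫ x in (0:ℝ)..t, cst lam w x := by
    rw [← ha0, ← hak]
    exact sum_integral_adjacent_intervals (fun i hik => (hfacts i hik).2.1)
  have hsum_d : ∑ i ∈ Finset.range k, (w (a (i+1)) - w (a i)) = w t - w 0 := by
    rw [← ha0, ← hak]
    exact Finset.sum_range_sub (fun n => w (a n)) k
  rw [← hsum, ← hsum_d]
  refine Finset.sum_le_sum fun i hik => ?_
  rw [Finset.mem_range] at hik
  obtain ⟨h1d, h1c, h1eq⟩ := hfacts i hik
  rw [← h1eq]
  exact integral_mono_on (hpiece' i hik).1 h1d h1c (fun x _ => deriv_le_cst hpos w x)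

lemma modifyPath (hΛ : 0 < Λ) (hmeas : Measurable (Function.uncurry lam))
    (hpos : ∀ t ξ, 0 < lam t ξ) (hbd : ∀ t ξ, lam t ξ ≤ Λ)
    {t : ℝ} (ht : 0 < t) (δ : ℝ) {w : ℝ → ℝ} (hw : PiecewiseC1On w 0 t) :
    ∃ w' : ℝ → ℝ, PiecewiseC1On w' 0 t ∧ w' t = w t + δ ∧ w' 0 = w 0 ∧
      (∫ s in (0:ℝ)..t, cst lam w' s) ≤ (∫ s in (0:ℝ)..t, cst lam w s) + max δ 0 := by
  have hwkeep := hw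
  rcases eq_or_ne δ 0 with rfl | hδ
  · exact ⟨w, hw, by simp, rfl, by simp⟩
  obtain ⟨hc, k, s, hsm, hs0, hsl, hpieces⟩ := hw
  have hk0 : k ≠ 0 := by
    rintro rfl
    rw [show (Fin.last 0) = 0 from rfl, hs0] at hsl
    linarith
  obtain ⟨m, rfl⟩ := Nat.exists_eq_succ_of_ne_zero hk0
  set q : ℝ := s (Fin.last m).castSucc with hq
  have hqmk : q = s ⟨m, by omega⟩ := rfl
  have hsq : ∀ i : ℕ, (h : i ≤ m) → s ⟨i, by omega⟩ ≤ q := by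
    intro i h
    rw [hqmk]
    exact hsm.monotone (Fin.mk_le_mk.2 h)
  have hlast : ContDiffOn ℝ 1 w (Icc q t) := by
    have := hpieces (Fin.last m)
    rwa [show (Fin.last m).succ = Fin.last (m + 1) from rfl, hsl] at this
  have hqt : q < t := by
    rw [← hsl, hqmk]
    exact hsm (Fin.mk_lt_mk.2 (by omega))
  have hq0 : 0 ≤ q := by
    rw [← hs0, hqmk]
    exact hsm.monotone (by rw [Fin.le_def]; simp)
  -- bound on deriv on last piece
  have hcont : ContinuousOn (derivWithin w (Icc q t)) (Icc q t) :=
    hlast.continuousOn_derivWithin (uniqueDiffOn_Icc hqt) le_rfl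
  obtain ⟨M, hM⟩ := (isCompact_Icc (a := q) (b := t)).exists_bound_of_continuousOn hcont
  have hMnn : 0 ≤ M := le_trans (norm_nonneg _) (hM q (left_mem_Icc.2 hqt.le))
  have hMd : ∀ x ∈ Ioo q t, |deriv w x| ≤ M := by
    intro x hx
    rw [← derivWithin_of_mem_nhds (Icc_mem_nhds hx.1 hx.2)]
    exact hM x (Ioo_subset_Icc_self hx)
  -- choose ε
  set ε : ℝ := min ((t - q)/2) (|δ|/(M + Λ + 1)) with hε
  have hδpos : 0 < |δ| := abs_pos.2 hδ
  have hεpos : 0 < ε := lt_min (by linarith) (by positivity)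
  have hεlt : ε < t - q := lt_of_le_of_lt (min_le_left _ _) (by linarith)
  have hεbig : M + Λ ≤ |δ| / ε := by
    have h1 : ε ≤ |δ|/(M + Λ + 1) := min_le_right _ _
    have h2 : ε * (M + Λ + 1) ≤ |δ| := by
      rw [← le_div_iff₀ (by positivity : (0:ℝ) < M + Λ + 1)]
      exact h1
    rw [le_div_iff₀ hεpos]
    nlinarith
  set c : ℝ := t - ε with hcdef
  have hqc : q < c := by simp only [hcdef]; linarith
  have hct : c < t := by simp only [hcdef]; linarith
  have hc0 : 0 < c := lt_of_le_of_lt hq0 hqc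
  -- the modified path
  set ramp : ℝ → ℝ := fun x => max ((x - c)/ε) 0 with hramp
  set w' : ℝ → ℝ := fun x => w x + δ * ramp x with hw'
  have hramp_le : ∀ x, x ≤ c → ramp x = 0 := by
    intro x hx
    simp only [hramp]
    rw [max_eq_right]
    rw [div_nonpos_iff]; right; exact ⟨by linarith, hεpos.le⟩
  have hramp_ge : ∀ x, c ≤ x → ramp x = (x - c)/ε := by
    intro x hx
    simp only [hramp]
    rw [max_eq_left]
    exact div_nonneg (by linarith) hεpos.le
  have hw'_le : ∀ x, x ≤ c → w' x = w x := fun x hx => by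
    simp [hw', hramp_le x hx]
  have hw'_t : w' t = w t + δ := by
    simp only [hw', hramp_ge t hct.le, hcdef]
    rw [show t - (t - ε) = ε by ring, div_self hεpos.ne']; ring
  have hw'_0 : w' 0 = w 0 := hw'_le 0 hc0.le
  -- derivative of w' on (c, t)
  have hderiv' : ∀ x ∈ Ioo c t, HasDerivAt w' (deriv w x + δ/ε) x := by
    intro x hx
    have hxq : x ∈ Ioo q t := ⟨lt_trans hqc hx.1, hx.2⟩
    have hdw : HasDerivAt w (deriv w x) x :=
      ((hlast.differentiableOn one_ne_zero x (Ioo_subset_Icc_self hxq)).differentiableAt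
        (Icc_mem_nhds hxq.1 hxq.2)).hasDerivAt
    have haff : HasDerivAt (fun y => w y + δ * ((y - c)/ε)) (deriv w x + δ/ε) x := by
      have h2 : HasDerivAt (fun y => δ * ((y - c)/ε)) (δ/ε) x := by
        have := (((hasDerivAt_id x).sub_const c).div_const ε).const_mul δ
        simpa [mul_one, div_eq_mul_inv, mul_comm, mul_assoc] using this
      exact hdw.add h2
    refine haff.congr_of_eventuallyEq ?_
    filter_upwards [IsOpen.mem_nhds isOpen_Ioi hx.1] with y hy
    simp [hw', hramp_ge y (le_of_lt hy)]
  have hderiv'_eq : ∀ x ∈ Ioo c t, deriv w' x = deriv w x + δ/ε := fun x hx =>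
    (hderiv' x hx).deriv
  -- derivative of w' below c
  have hderiv'_lo : ∀ x ∈ Iio c, deriv w' x = deriv w x := by
    intro x hx
    refine Filter.EventuallyEq.deriv_eq ?_
    filter_upwards [IsOpen.mem_nhds isOpen_Iio hx] with y hy
    exact hw'_le y (le_of_lt hy)
  -- piecewise C1 structure of w'
  have hPW : PiecewiseC1On w' 0 t := by
    refine ⟨?_, ?_⟩
    · refine hc.add (Continuous.continuousOn ?_)
      refine continuous_const.mul ?_
      exact ((continuous_id.sub continuous_const).div_const ε).max continuous_const
    · set s' : Fin (m + 2 + 1) → ℝ := fun i => if i.val ≤ m then s ⟨min i.val m, by omega⟩ else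
        if i.val = m + 1 then c else t with hs'
      have hs'lo : ∀ (i : Fin (m + 3)), (h : i.val ≤ m) → s' i = s ⟨i.val, by omega⟩ := by
        intro i h; simp only [hs']; rw [if_pos h]; congr 1; rw [Fin.mk.injEq]; omega
      have hs'c : ∀ (i : Fin (m + 3)), i.val = m + 1 → s' i = c := by
        intro i h; simp only [hs']; rw [if_neg (by omega), if_pos h]
      have hs't : ∀ (i : Fin (m + 3)), i.val = m + 2 → s' i = t := by
        intro i h; simp only [hs']; rw [if_neg (by omega), if_neg (by omega)]
      refine ⟨m + 2, s', ?_, ?_, ?_, ?_⟩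
      · intro i j hij
        rw [Fin.lt_def] at hij
        have hi3 := i.isLt
        have hj3 := j.isLt
        by_cases hj : j.val ≤ m
        · rw [hs'lo i (by omega), hs'lo j hj]
          exact hsm (Fin.mk_lt_mk.2 hij)
        · by_cases hj1 : j.val = m + 1
          · rw [hs'c j hj1, hs'lo i (by omega)]
            exact lt_of_le_of_lt (hsq i.val (by omega)) hqc
          · rw [hs't j (by omega)]
            by_cases hi : i.val ≤ m
            · rw [hs'lo i hi]
              exact lt_of_le_of_lt (hsq i.val hi) hqt
            · rw [hs'c i (by omega)]
              exact hct
      · rw [hs'lo 0 (by simp)]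
        rw [← hs0]; congr 1
      · exact hs't (Fin.last (m + 2)) rfl
      · intro i
        have hi2 := i.isLt
        have hcsv : (i.castSucc : Fin (m + 3)).val = i.val := rfl
        have hsuv : (i.succ : Fin (m + 3)).val = i.val + 1 := rfl
        by_cases hi : i.val + 1 ≤ m
        · -- old interior piece
          rw [hs'lo i.castSucc (by omega), hs'lo i.succ (by rw [hsuv]; omega)]
          have hold := hpieces ⟨i.val, by omega⟩
          have e1 : ((⟨i.val, by omega⟩ : Fin (m + 1)).castSucc : Fin (m + 2)) =
              ⟨(i.castSucc : Fin (m + 3)).val, by omega⟩ := rfl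
          have e2 : ((⟨i.val, by omega⟩ : Fin (m + 1)).succ : Fin (m + 2)) =
              ⟨(i.succ : Fin (m + 3)).val, by omega⟩ := rfl
          rw [e1, e2] at hold
          refine hold.congr fun x hx => ?_
          refine hw'_le x (le_trans hx.2 (le_trans ?_ hqc.le))
          have : (i.succ : Fin (m + 3)).val ≤ m := by omega
          exact hsq _ this
        · by_cases hi1 : i.val = m
          · -- piece [q, c]
            rw [hs'lo i.castSucc (by rw [hcsv]; omega), hs'c i.succ (by rw [hsuv]; omega)]
            have e1 : s (⟨(i.castSucc : Fin (m + 3)).val, by omega⟩ : Fin (m + 2)) = q := by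
              rw [hqmk]; congr 1; rw [Fin.mk.injEq]; rw [hcsv]; omega
            rw [e1]
            refine (hlast.mono (Icc_subset_Icc le_rfl hct.le)).congr fun x hx => hw'_le x hx.2
          · -- piece [c, t]
            have hi2' : i.val = m + 1 := by omega
            rw [hs'c i.castSucc (by rw [hcsv]; omega), hs't i.succ (by rw [hsuv]; omega)]
            have hsub : Icc c t ⊆ Icc q t := Icc_subset_Icc hqc.le le_rfl
            refine ContDiffOn.congr (f := fun x => w x + δ * ((x - c)/ε)) ?_ ?_
            · exact (hlast.mono hsub).add
                ((contDiff_const.mul ((contDiff_id.sub contDiff_const).div_const ε)).contDiffOn)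
            · intro x hx
              simp only [hw', hramp_ge x hx.1]
  refine ⟨w', hPW, hw'_t, hw'_0, ?_⟩
  -- helpers for ae congruence on open intervals
  have hIIcongr : ∀ (a b : ℝ), a ≤ b → ∀ (g g' : ℝ → ℝ), IntervalIntegrable g volume a b →
      (∀ x ∈ Ioo a b, g x = g' x) → IntervalIntegrable g' volume a b := by
    intro a b hab g g' hg hgg
    rw [intervalIntegrable_iff_integrableOn_Ioc_of_le hab] at hg ⊢
    unfold IntegrableOn at *
    rw [(Measure.restrict_congr_set Ioo_ae_eq_Ioc).symm] at hg ⊢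
    exact hg.congr ((ae_restrict_iff' measurableSet_Ioo).2 (Eventually.of_forall hgg))
  have hIntcongr : ∀ (a b : ℝ), a ≤ b → ∀ (g g' : ℝ → ℝ), (∀ x ∈ Ioo a b, g x = g' x) →
      (∫ x in a..b, g x) = ∫ x in a..b, g' x := by
    intro a b hab g g' hgg
    refine integral_congr_ae ?_
    have hbae : ∀ᵐ x : ℝ ∂volume, x ≠ b := by
      refine ae_iff.2 ?_
      simpa using Real.volume_singleton
    filter_upwards [hbae] with x hxb hxI
    rw [uIoc_of_le hab] at hxI
    exact hgg x ⟨hxI.1, lt_of_le_of_ne hxI.2 hxb⟩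
  -- integrability of cst w
  obtain ⟨hii_w, -⟩ := path_facts hmeas hpos hbd ht.le hwkeep
  have hsub1 : uIcc 0 c ⊆ uIcc 0 t := by
    rw [uIcc_of_le hc0.le, uIcc_of_le ht.le]
    exact Icc_subset_Icc le_rfl hct.le
  have hsub2 : uIcc c t ⊆ uIcc 0 t := by
    rw [uIcc_of_le hct.le, uIcc_of_le ht.le]
    exact Icc_subset_Icc hc0.le le_rfl
  have hii_w1 : IntervalIntegrable (cst lam w) volume 0 c := hii_w.mono_set hsub1
  have hii_w2 : IntervalIntegrable (cst lam w) volume c t := hii_w.mono_set hsub2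
  obtain ⟨hd_ct, -, heq_ct⟩ :=
    piece_facts (Λ := Λ) hmeas hpos hbd hct.le (hlast.mono (Icc_subset_Icc hqc.le le_rfl))
  -- head: cst w' = cst w on (0,c)
  have hae1 : ∀ x ∈ Ioo 0 c, cst lam w x = cst lam w' x := by
    intro x hx
    simp only [cst]
    rw [hw'_le x hx.2.le, hderiv'_lo x hx.2]
  have hii_w'1 : IntervalIntegrable (cst lam w') volume 0 c :=
    hIIcongr 0 c hc0.le _ _ hii_w1 hae1
  have hint_head : (∫ x in (0:ℝ)..c, cst lam w' x) = ∫ x in (0:ℝ)..c, cst lam w x :=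
    (hIntcongr 0 c hc0.le _ _ hae1).symm
  have htail_ge : w t - w c ≤ ∫ x in c..t, cst lam w x := by
    rw [← heq_ct]
    exact integral_mono_on hct.le hd_ct hii_w2 (fun x _ => deriv_le_cst hpos w x)
  have htc : t - c = ε := by simp only [hcdef]; ring
  rcases lt_or_gt_of_ne hδ with hneg | hpos'
  · -- δ < 0 : tail integrand vanishes
    have habs : |δ| = -δ := abs_of_neg hneg
    have htail0 : ∀ x ∈ Ioo c t, cst lam w x * 0 = cst lam w' x := by
      intro x hx
      have hxq : x ∈ Ioo q t := ⟨lt_trans hqc hx.1, hx.2⟩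
      have hM' := abs_le.1 (hMd x hxq)
      have hlm := hpos x (w' x)
      have hlmb := hbd x (w' x)
      have hde' : δ / ε ≤ -(M + Λ) := by
        have h := hεbig
        rw [habs, neg_div] at h
        linarith
      have hvle : deriv w' x ≤ -lam x (w' x) := by
        rw [hderiv'_eq x hx]; linarith [hM'.2]
      have hr : deriv w' x / lam x (w' x) ≤ -1 := by
        rw [div_le_iff₀ hlm]; linarith
      simp only [cst]
      rw [hlKernel_of_le_neg_one hr, mul_zero, mul_zero]
    have hii_w'2 : IntervalIntegrable (cst lam w') volume c t :=
      hIIcongr c t hct.le _ _ (hii_w2.mul_const 0) htail0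
    have hint_tail : (∫ x in c..t, cst lam w' x) = 0 := by
      rw [← hIntcongr c t hct.le _ _ htail0]
      simp
    rw [← integral_add_adjacent_intervals hii_w'1 hii_w'2,
      ← integral_add_adjacent_intervals hii_w1 hii_w2, hint_head, hint_tail]
    have h1 : (0:ℝ) ≤ ∫ x in c..t, cst lam w x :=
      integral_nonneg hct.le (fun x _ => cst_nonneg hpos w x)
    have h2 : (0:ℝ) ≤ max δ 0 := le_max_right _ _
    linarith
  · -- δ > 0 : tail integrand is deriv w + δ/ε
    have habs : |δ| = δ := abs_of_pos hpos'
    have htail' : ∀ x ∈ Ioo c t, deriv w x + δ/ε = cst lam w' x := by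
      intro x hx
      have hxq : x ∈ Ioo q t := ⟨lt_trans hqc hx.1, hx.2⟩
      have hM' := abs_le.1 (hMd x hxq)
      have hlm := hpos x (w' x)
      have hlmb := hbd x (w' x)
      have hde : M + Λ ≤ δ / ε := by rwa [habs] at hεbig
      have hvge : lam x (w' x) ≤ deriv w' x := by
        rw [hderiv'_eq x hx]; linarith [hM'.1]
      have h1 : (1:ℝ) ≤ deriv w' x / lam x (w' x) := (one_le_div hlm).2 hvge
      simp only [cst]
      rw [hlKernel_of_one_le h1, mul_div_cancel₀ _ hlm.ne', hderiv'_eq x hx]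
    have hii_aff : IntervalIntegrable (fun x => deriv w x + δ/ε) volume c t :=
      hd_ct.add intervalIntegrable_const
    have hii_w'2 : IntervalIntegrable (cst lam w') volume c t :=
      hIIcongr c t hct.le _ _ hii_aff htail'
    have hint_tail : (∫ x in c..t, cst lam w' x) = (w t - w c) + δ := by
      rw [← hIntcongr c t hct.le _ _ htail']
      rw [integral_add hd_ct intervalIntegrable_const, heq_ct,
        intervalIntegral.integral_const, smul_eq_mul, htc]
      field_simp
    rw [← integral_add_adjacent_intervals hii_w'1 hii_w'2,
      ← integral_add_adjacent_intervals hii_w1 hii_w2, hint_head, hint_tail]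
    have h2 : max δ 0 = δ := max_eq_left hpos'.le
    linarith

lemma piecewiseC1On_const {a b : ℝ} (hab : a ≤ b) (ζ : ℝ) :
    PiecewiseC1On (fun _ => ζ) a b := by
  refine ⟨continuousOn_const, ?_⟩
  rcases eq_or_lt_of_le hab with rfl | h
  · exact ⟨0, fun _ => a, fun i j hij => absurd (Fin.lt_def.1 hij) (by omega),
      rfl, rfl, fun i => i.elim0⟩
  · refine ⟨1, fun i => if i = 0 then a else b, ?_, if_pos rfl, if_neg (by decide), ?_⟩
    · rw [Fin.strictMono_iff_lt_succ]
      intro i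
      have : i = 0 := Subsingleton.elim i 0
      subst this
      simpa using h
    · intro i
      exact contDiffOn_const

/-- Spatial 1-Lipschitz monotone property of the Hopf–Lax semigroup. -/
theorem stmt11 (T Λ : ℝ) (hT : 0 < T) (hΛ : 0 < Λ) (lam : ℝ → ℝ → ℝ)
    (hmeas : Measurable (Function.uncurry lam))
    (hpos : ∀ t ξ, 0 < lam t ξ) (hbd : ∀ t ξ, lam t ξ ≤ Λ)
    (f : ℝ → ℝ) (hf : ∀ ξ ξ' : ℝ, ξ ≤ ξ' → 0 ≤ f ξ' - f ξ ∧ f ξ' - f ξ ≤ ξ' - ξ) :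
    ∀ t ∈ Set.Icc (0:ℝ) T, ∀ ξ ξ' : ℝ, ξ ≤ ξ' →
      0 ≤ hopfLax lam f t ξ' - hopfLax lam f t ξ ∧
        hopfLax lam f t ξ' - hopfLax lam f t ξ ≤ ξ' - ξ := by
  intro t htT ξ ξ' hξ
  rcases eq_or_lt_of_le htT.1 with ht0 | htpos
  · -- t = 0
    subst ht0
    have h0 : ∀ ζ : ℝ, hopfLax lam f 0 ζ = f ζ := by
      intro ζ
      have hset : {y : ℝ | ∃ w : ℝ → ℝ, PiecewiseC1On w 0 0 ∧ w 0 = ζ ∧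
          y = (∫ s in (0:ℝ)..0, lam s (w s) * hlKernel (deriv w s / lam s (w s))) + f (w 0)}
          = {f ζ} := by
        ext y
        simp only [mem_setOf_eq, mem_singleton_iff]
        constructor
        · rintro ⟨w, hw, hw0, rfl⟩
          rw [intervalIntegral.integral_same, hw0, zero_add]
        · rintro rfl
          exact ⟨fun _ => ζ, piecewiseC1On_const le_rfl ζ, rfl,
            by rw [intervalIntegral.integral_same, zero_add]⟩
      rw [hopfLax, hset, csInf_singleton]
    rw [h0, h0]
    exact hf ξ ξ' hξ
  · -- t > 0
    set S : ℝ → Set ℝ := fun ζ => {y : ℝ | ∃ w : ℝ → ℝ, PiecewiseC1On w 0 t ∧ w t = ζ ∧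
      y = (∫ s in (0:ℝ)..t, cst lam w s) + f (w 0)} with hS
    have hhl : ∀ ζ : ℝ, hopfLax lam f t ζ = sInf (S ζ) := fun ζ => rfl
    have hne : ∀ ζ : ℝ, (S ζ).Nonempty := by
      intro ζ
      exact ⟨_, fun _ => ζ, piecewiseC1On_const htT.1 ζ, rfl, rfl⟩
    have hbdd : ∀ ζ : ℝ, f ζ ∈ lowerBounds (S ζ) := by
      rintro ζ y ⟨w, hw, hwt, rfl⟩
      obtain ⟨hii, hlow⟩ := path_facts (Λ := Λ) hmeas hpos hbd htT.1 hw
      have h0 : 0 ≤ ∫ s in (0:ℝ)..t, cst lam w s :=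
        integral_nonneg htT.1 (fun x _ => cst_nonneg hpos w x)
      rw [hwt] at hlow
      rcases le_total (w 0) ζ with h | h
      · have h1 := (hf (w 0) ζ h).2
        linarith
      · have h1 := (hf ζ (w 0) h).1
        linarith
    have key : ∀ (ζ δ : ℝ), sInf (S (ζ + δ)) ≤ sInf (S ζ) + max δ 0 := by
      intro ζ δ
      have h1 : sInf (S (ζ + δ)) - max δ 0 ≤ sInf (S ζ) := by
        refine le_csInf (hne ζ) ?_
        rintro y ⟨w, hw, hwt, rfl⟩
        obtain ⟨w', hw', hw't, hw'0, hcost⟩ := modifyPath hΛ hmeas hpos hbd htpos δ hw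
        have hy' : (∫ s in (0:ℝ)..t, cst lam w' s) + f (w' 0) ∈ S (ζ + δ) :=
          ⟨w', hw', by rw [hw't, hwt], rfl⟩
        have h2 := csInf_le ⟨f (ζ + δ), hbdd _⟩ hy'
        rw [hw'0] at h2
        linarith
      linarith
    constructor
    · -- monotone : sInf S ξ ≤ sInf S ξ'
      have := key ξ' (ξ - ξ')
      rw [show ξ' + (ξ - ξ') = ξ by ring, max_eq_right (by linarith)] at this
      rw [hhl, hhl]
      linarith
    · have := key ξ (ξ' - ξ)
      rw [show ξ + (ξ' - ξ) = ξ' by ring, max_eq_left (by linarith)] at this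
      rw [hhl, hhl]
      linarith
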